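/- arXiv:2107.08277 — 2 statements merged into one kernel-verified Lean document; each statement's English description precedes it below -/
import Mathlib

section
/- Let $(M,d)$ be a metric space, and let $x, c, \hat{f}, g \in M$ (a demand, an optimal center, a prediction, and an open facility). Let $f > 0$ and set $r = d(\hat{f}, g)$, and suppose $r \le f$. If a facility is opened at $\hat{f}$ with probability $r/f$ (incurring cost $f + d(x, \hat{f})$) and otherwise $x$ connects to $g$ (incurring cost $d(x, g)$), then the expected cost is at most $d(x,c) + r + \frac{r}{f} d(\hat{f}, c) + \left(1 - \frac{r}{f}\right) d(g, c)$. -/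
theorem stmt1 {M : Type*} [MetricSpace M] (x c fhat g : M) (f r : ℝ)
    (hf : 0 < f) (hr : r = dist fhat g) (hrf : r ≤ f) :
    (r / f) * (f + dist x fhat) + (1 - r / f) * dist x g
      ≤ dist x c + r + (r / f) * dist fhat c + (1 - r / f) * dist g c := by
  have h1 : dist x fhat ≤ dist x c + dist fhat c := by
    rw [dist_comm fhat c]; exact dist_triangle x c fhat
  have h2 : dist x g ≤ dist x c + dist g c := by
    rw [dist_comm g c]; exact dist_triangle x c g
  have hr0 : 0 ≤ r := hr ▸ dist_nonneg
  have hp : 0 ≤ r / f := div_nonneg hr0 hf.le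
  have hq : 0 ≤ 1 - r / f := by
    have : r / f ≤ 1 := (div_le_one hf).mpr hrf
    linarith
  have hrf' : r / f * f = r := div_mul_cancel₀ r hf.ne'
  nlinarith [mul_le_mul_of_nonneg_left h1 hp, mul_le_mul_of_nonneg_left h2 hq]
end

section
/- Let $f > 0$, $m \ge 1$, $\lambda \ge 1$, and let $a, r, \eta, \eta' \ge 0$ satisfy $r \le f$, $r \le (m\lambda + 1)\eta$, and $\eta' \le m\lambda \eta$. Then $a + r + \frac{r}{f}\eta + \left(1 - \frac{r}{f}\right)\eta' \le a + (2m\lambda + 1)\eta$. -/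
theorem stmt2 (f m lam a r η η' : ℝ) (hf : 0 < f) (hm : 1 ≤ m) (hlam : 1 ≤ lam)
    (ha : 0 ≤ a) (hr0 : 0 ≤ r) (hη : 0 ≤ η) (hη' : 0 ≤ η')
    (hrf : r ≤ f) (hr1 : r ≤ (m * lam + 1) * η) (hη'le : η' ≤ m * lam * η) :
    a + r + (r / f) * η + (1 - r / f) * η' ≤ a + (2 * m * lam + 1) * η := by
  have ht0 : 0 ≤ r / f := div_nonneg hr0 hf.le
  have ht1 : r / f ≤ 1 := (div_le_one hf).2 hrf
  have hml : 1 ≤ m * lam := by nlinarith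
  nlinarith [mul_nonneg (sub_nonneg.2 ht1) (sub_nonneg.2 hη'le),
    mul_nonneg ht0 (mul_nonneg (sub_nonneg.2 hml) hη),
    mul_nonneg ht0 hη]
end
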